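/- Let Q : ℝ → ℝ be differentiable and suppose there exist constants K₁, K₂ > 0 such that Q'(x) ≤ -K₂ for all x ≤ -K₁ and Q'(x) ≥ K₂ for all x ≥ K₁. Then Q has exponentially tight level sets: there exists a₀ > 0 such that for every a ≥ a₀ there is a constant C(a) > 0 with ∫_{y : Q(y) ≥ a} exp(-Q(z)/ε) dz ≤ C(a) exp(-a/ε) for all ε ∈ (0,1]. -/

import Mathlib

open MeasureTheory Set Real

lemma exp_mul_integrableOn_Iic {b c : ℝ} (hb : 0 < b) :
    IntegrableOn (fun x => Real.exp (b * x)) (Set.Iic c) := by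
  have h1 : IntegrableOn (fun x => Real.exp (-b * x)) (Set.Ici (-c)) :=
    (integrableOn_Ici_iff_integrableOn_Ioi (by simp)).2 (exp_neg_integrableOn_Ioi (-c) hb)
  have h2 : Integrable ((Set.Ici (-c)).indicator fun x => Real.exp (-b * x)) :=
    (integrable_indicator_iff measurableSet_Ici).2 h1
  have h3 := h2.comp_neg
  have heq : (fun x => ((Set.Ici (-c)).indicator fun x => Real.exp (-b * x)) (-x))
      = (Set.Iic c).indicator (fun x => Real.exp (b * x)) := by
    funext x
    by_cases hx : x ≤ c
    · simp only [Set.indicator, Set.mem_Ici, Set.mem_Iic, neg_le_neg_iff, hx, if_true]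
      ring_nf
    · simp [Set.indicator, hx]
  rw [heq] at h3
  exact (integrable_indicator_iff measurableSet_Iic).1 h3

/-- Exponentially tight level sets for a potential with derivative bounded away
from zero outside a compact interval. -/
theorem stmt0 (Q : ℝ → ℝ) (hQ : Differentiable ℝ Q) (K₁ K₂ : ℝ)
    (hK₁ : 0 < K₁) (hK₂ : 0 < K₂)
    (h1 : ∀ x ≤ -K₁, deriv Q x ≤ -K₂)
    (h2 : ∀ x, K₁ ≤ x → K₂ ≤ deriv Q x) :
    ∃ a₀ > 0, ∀ a ≥ a₀, ∃ C > 0, ∀ ε ∈ Set.Ioc (0:ℝ) 1,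
      ∫ z in {z : ℝ | a ≤ Q z}, Real.exp (-Q z / ε) ≤ C * Real.exp (-a / ε) := by
  have hQc : Continuous Q := hQ.continuous
  -- growth on the right
  have keyR : ∀ x, K₁ ≤ x → Q K₁ + K₂ * (x - K₁) ≤ Q x := by
    intro x hx
    have mono : MonotoneOn (fun y => Q y - K₂ * y) (Set.Ici K₁) := by
      refine monotoneOn_of_deriv_nonneg (convex_Ici K₁)
        ((hQc.sub (continuous_const.mul continuous_id)).continuousOn)
        ((hQ.sub (differentiable_id.const_mul K₂)).differentiableOn) ?_
      intro y hy
      rw [interior_Ici] at hy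
      have hd : deriv (fun y => Q y - K₂ * y) y = deriv Q y - K₂ := by
        have h' : HasDerivAt (fun y => Q y - K₂ * y) (deriv Q y - K₂) y := by
          exact ((hQ y).hasDerivAt.sub ((hasDerivAt_id y).const_mul K₂)).congr_deriv (by ring)
        exact h'.deriv
      rw [hd]
      have := h2 y hy.le
      linarith
    have := mono self_mem_Ici hx hx
    simp only at this
    linarith
  -- growth on the left
  have keyL : ∀ x, x ≤ -K₁ → Q (-K₁) + K₂ * (-K₁ - x) ≤ Q x := by
    intro x hx
    have anti : AntitoneOn (fun y => Q y + K₂ * y) (Set.Iic (-K₁)) := by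
      refine antitoneOn_of_deriv_nonpos (convex_Iic (-K₁))
        ((hQc.add (continuous_const.mul continuous_id)).continuousOn)
        ((hQ.add (differentiable_id.const_mul K₂)).differentiableOn) ?_
      intro y hy
      rw [interior_Iic] at hy
      have hd : deriv (fun y => Q y + K₂ * y) y = deriv Q y + K₂ := by
        have h' : HasDerivAt (fun y => Q y + K₂ * y) (deriv Q y + K₂) y := by
          exact ((hQ y).hasDerivAt.add ((hasDerivAt_id y).const_mul K₂)).congr_deriv (by ring)
        exact h'.deriv
      rw [hd]
      have := h1 y hy.le
      linarith
    have := anti hx self_mem_Iic hx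
    simp only at this
    linarith
  -- integrability of exp(-Q)
  have hInt : Integrable (fun x => Real.exp (-Q x)) := by
    have hmeas : AEStronglyMeasurable (fun x => Real.exp (-Q x)) volume :=
      (hQc.neg.rexp).aestronglyMeasurable
    have hR : IntegrableOn (fun x => Real.exp (-Q x)) (Set.Ici K₁) := by
      refine Integrable.mono'
        (((integrableOn_Ici_iff_integrableOn_Ioi (by simp)).2
          (exp_neg_integrableOn_Ioi K₁ hK₂)).const_mul (Real.exp (K₂ * K₁ - Q K₁)))
        ?_ ?_
      · exact hmeas.restrict
      · filter_upwards [ae_restrict_mem measurableSet_Ici] with x hx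
        rw [Real.norm_eq_abs, abs_of_pos (Real.exp_pos _),
          ← Real.exp_add]
        apply Real.exp_le_exp.2
        have := keyR x hx
        nlinarith
    have hL : IntegrableOn (fun x => Real.exp (-Q x)) (Set.Iic (-K₁)) := by
      refine Integrable.mono'
        ((exp_mul_integrableOn_Iic (b := K₂) (c := -K₁) hK₂).const_mul
          (Real.exp (K₂ * K₁ - Q (-K₁)))) ?_ ?_
      · exact hmeas.restrict
      · filter_upwards [ae_restrict_mem measurableSet_Iic] with x hx
        rw [Real.norm_eq_abs, abs_of_pos (Real.exp_pos _), ← Real.exp_add]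
        apply Real.exp_le_exp.2
        have := keyL x hx
        nlinarith
    have hM : IntegrableOn (fun x => Real.exp (-Q x)) (Set.Icc (-K₁) K₁) :=
      (hQc.neg.rexp).continuousOn.integrableOn_Icc
    have hunion : (Set.Iic (-K₁)) ∪ (Set.Icc (-K₁) K₁) ∪ (Set.Ici K₁) = Set.univ := by
      ext x
      simp only [Set.mem_union, Set.mem_Iic, Set.mem_Icc, Set.mem_Ici, Set.mem_univ, iff_true]
      rcases le_total x (-K₁) with h | h
      · left; left; exact h
      · rcases le_total x K₁ with h' | h'
        · left; right; exact ⟨h, h'⟩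
        · right; exact h'
    have := ((hL.union hM).union hR)
    rwa [hunion, integrableOn_univ] at this
  -- the actual statement
  refine ⟨1, one_pos, fun a ha => ?_⟩
  set I := ∫ x, Real.exp (-Q x)
  have hI : 0 ≤ I := integral_nonneg fun x => (Real.exp_pos _).le
  refine ⟨Real.exp a * (I + 1), by positivity, fun ε hε => ?_⟩
  obtain ⟨hε0, hε1⟩ := hε
  have hSmeas : MeasurableSet {z : ℝ | a ≤ Q z} :=
    measurableSet_le measurable_const hQc.measurable
  -- pointwise bound on the set
  have hpt : ∀ z ∈ {z : ℝ | a ≤ Q z},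
      Real.exp (-Q z / ε) ≤ Real.exp (-a / ε) * (Real.exp a * Real.exp (-Q z)) := by
    intro z hz
    rw [← Real.exp_add, ← Real.exp_add]
    apply Real.exp_le_exp.2
    have hz' : a ≤ Q z := hz
    have h1ε : 1 ≤ 1 / ε := by
      rw [le_div_iff₀ hε0]; linarith
    -- -Q z / ε = -a/ε + (a - Q z)/ε ≤ -a/ε + (a - Q z)
    have : (a - Q z) / ε ≤ a - Q z := by
      rw [div_le_iff₀ hε0]
      nlinarith
    have heq : -Q z / ε = -a / ε + (a - Q z) / ε := by field_simp; ring
    rw [heq]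
    linarith
  have hg : IntegrableOn (fun z => Real.exp (-a / ε) * (Real.exp a * Real.exp (-Q z)))
      {z : ℝ | a ≤ Q z} :=
    ((hInt.const_mul (Real.exp a)).const_mul (Real.exp (-a / ε))).integrableOn
  have hf : IntegrableOn (fun z => Real.exp (-Q z / ε)) {z : ℝ | a ≤ Q z} := by
    refine Integrable.mono' hg ?_ ?_
    · exact ((hQc.neg.div_const ε).rexp).aestronglyMeasurable.restrict
    · filter_upwards [ae_restrict_mem hSmeas] with z hz
      rw [Real.norm_eq_abs, abs_of_pos (Real.exp_pos _)]
      exact hpt z hz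
  calc ∫ z in {z : ℝ | a ≤ Q z}, Real.exp (-Q z / ε)
      ≤ ∫ z in {z : ℝ | a ≤ Q z}, Real.exp (-a / ε) * (Real.exp a * Real.exp (-Q z)) :=
        setIntegral_mono_on hf hg hSmeas hpt
    _ = Real.exp (-a / ε) * Real.exp a * ∫ z in {z : ℝ | a ≤ Q z}, Real.exp (-Q z) := by
        rw [← integral_const_mul]; congr 1; funext z; ring
    _ ≤ Real.exp (-a / ε) * Real.exp a * I := by
        apply mul_le_mul_of_nonneg_left _ (by positivity)
        exact setIntegral_le_integral hInt
          (Filter.Eventually.of_forall fun x => (Real.exp_pos _).le)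
    _ ≤ Real.exp a * (I + 1) * Real.exp (-a / ε) := by
        nlinarith [Real.exp_pos (-a / ε), Real.exp_pos a]
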